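/- Let ℓ ≥ r ≥ 3 be integers and let H be an r-graph. Then H is 𝒦_{ℓ+1}^r-saturated if and only if both of the following hold: (i) every r-set of vertices that spans a clique K_r in the graph ∂_{r−2}H is an edge of H; and (ii) ∂_{r−2}H is K_r-maximal, K_{ℓ+1}-free. -/

import Mathlib

open Finset

/-- `H` contains a member of the family `𝒦_{ℓ+1}^r` as a subgraph, i.e. there is an
`(ℓ+1)`-set of vertices every pair of which is covered by an edge of `H`. -/
def ContainsKFam {V : Type*} (H : Finset (Finset V)) (ℓ : ℕ) : Prop :=
  ∃ S : Finset V, S.card = ℓ + 1 ∧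
    ∀ u ∈ S, ∀ v ∈ S, u ≠ v → ∃ e ∈ H, u ∈ e ∧ v ∈ e

/-- `H` is `𝒦_{ℓ+1}^r`-free. -/
def KFamFree {V : Type*} (H : Finset (Finset V)) (ℓ : ℕ) : Prop := ¬ ContainsKFam H ℓ

/-- `H` is `𝒦_{ℓ+1}^r`-saturated: it is `𝒦_{ℓ+1}^r`-free, but adding any new `r`-set as an
edge creates a member of `𝒦_{ℓ+1}^r`. -/
def KFamSaturated {V : Type*} [DecidableEq V] (H : Finset (Finset V)) (r ℓ : ℕ) : Prop :=
  KFamFree H ℓ ∧ ∀ e : Finset V, e.card = r → e ∉ H → ContainsKFam (insert e H) ℓ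

/-- The graph `∂_{r-2} H`: two vertices are adjacent iff they are distinct and lie in a
common edge of `H`. -/
def shadowGraph {V : Type*} (H : Finset (Finset V)) : SimpleGraph V where
  Adj u v := u ≠ v ∧ ∃ e ∈ H, u ∈ e ∧ v ∈ e
  symm := by
    constructor
    rintro u v ⟨huv, e, he, hu, hv⟩
    exact ⟨huv.symm, e, he, hv, hu⟩
  loopless := by
    constructor
    rintro u ⟨h, -⟩
    exact h rfl

/-- The number of copies of `K_r` in `G`, i.e. the number of `r`-cliques of `G`. -/
noncomputable def cliqueCount {V : Type*} (G : SimpleGraph V) (r : ℕ) : ℕ :=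
  {s : Finset V | G.IsNClique r s}.ncard

/-- `G` is `K_r`-maximal, `K_{ℓ+1}`-free: `G` is `K_{ℓ+1}`-free and every supergraph of `G`
(on the same vertex set) containing strictly more copies of `K_r` contains a `K_{ℓ+1}`. -/
def KrMaxKlFree {V : Type*} (r ℓ : ℕ) (G : SimpleGraph V) : Prop :=
  G.CliqueFree (ℓ + 1) ∧
    ∀ G' : SimpleGraph V, G ≤ G' → cliqueCount G r < cliqueCount G' r →
      ¬ G'.CliqueFree (ℓ + 1)


lemma containsKFam_iff {V : Type*} (H : Finset (Finset V)) (ℓ : ℕ) :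
    ContainsKFam H ℓ ↔ ¬ (shadowGraph H).CliqueFree (ℓ + 1) := by
  constructor
  · rintro ⟨S, hS, hpair⟩ hfree
    exact hfree S ⟨fun u hu v hv huv =>
      ⟨huv, hpair u (Finset.mem_coe.mp hu) v (Finset.mem_coe.mp hv) huv⟩, hS⟩
  · intro h
    rw [SimpleGraph.CliqueFree] at h
    push_neg at h
    obtain ⟨S, hS⟩ := h
    exact ⟨S, hS.2, fun u hu v hv huv =>
      (hS.1 (Finset.mem_coe.mpr hu) (Finset.mem_coe.mpr hv) huv).2⟩

lemma mem_isNClique_shadow {V : Type*} (H : Finset (Finset V)) {s : Finset V} {r : ℕ}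
    (hs : s ∈ H) (hc : s.card = r) : (shadowGraph H).IsNClique r s :=
  ⟨fun u hu v hv huv => ⟨huv, s, hs, Finset.mem_coe.mp hu, Finset.mem_coe.mp hv⟩, hc⟩

/-- Lemma 2.5: `H` is `𝒦_{ℓ+1}^r`-saturated iff every `r`-clique of the
shadow graph is an edge of `H` and the shadow graph is `K_r`-maximal, `K_{ℓ+1}`-free. -/
theorem saturated_iff_shadow_maximal
    (ℓ r n : ℕ) (hr : 3 ≤ r) (hℓr : r ≤ ℓ) (H : Finset (Finset (Fin n)))
    (hcard : ∀ e ∈ H, e.card = r) :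
    KFamSaturated H r ℓ ↔
      ((∀ s : Finset (Fin n), (shadowGraph H).IsNClique r s → s ∈ H) ∧
        KrMaxKlFree r ℓ (shadowGraph H)) := by
  constructor
  · rintro ⟨hfree, hsat⟩
    have hfree' : (shadowGraph H).CliqueFree (ℓ + 1) := by
      by_contra h
      exact hfree ((containsKFam_iff H ℓ).mpr h)
    have hcl : ∀ s : Finset (Fin n), (shadowGraph H).IsNClique r s → s ∈ H := by
      intro s hs
      by_contra hns
      obtain ⟨S, hScard, hSpair⟩ := hsat s hs.2 hns
      refine hfree ⟨S, hScard, ?_⟩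
      intro u hu v hv huv
      obtain ⟨e, he, hue, hve⟩ := hSpair u hu v hv huv
      rcases Finset.mem_insert.mp he with rfl | he'
      · exact (hs.1 (Finset.mem_coe.mpr hue) (Finset.mem_coe.mpr hve) huv).2
      · exact ⟨e, he', hue, hve⟩
    refine ⟨hcl, hfree', ?_⟩
    intro G' hle hcount hfree''
    have hAB : {s : Finset (Fin n) | (shadowGraph H).IsNClique r s} ⊆
        {s : Finset (Fin n) | G'.IsNClique r s} :=
      fun s hs => ⟨hs.1.mono hle, hs.2⟩
    have hex : ∃ s : Finset (Fin n), G'.IsNClique r s ∧ ¬ (shadowGraph H).IsNClique r s := by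
      by_contra h
      push_neg at h
      have hBA : {s : Finset (Fin n) | G'.IsNClique r s} ⊆
          {s : Finset (Fin n) | (shadowGraph H).IsNClique r s} := fun s hs => h s hs
      have := Set.ncard_le_ncard hBA (Set.toFinite _)
      unfold cliqueCount at hcount
      omega
    obtain ⟨s, hsB, hsA⟩ := hex
    have hsH : s ∉ H := fun h => hsA (mem_isNClique_shadow H h hsB.2)
    obtain ⟨S, hScard, hSpair⟩ := hsat s hsB.2 hsH
    refine hfree'' S ⟨?_, hScard⟩
    intro u hu v hv huv
    obtain ⟨e, he, hue, hve⟩ := hSpair u (Finset.mem_coe.mp hu) v (Finset.mem_coe.mp hv) huv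
    rcases Finset.mem_insert.mp he with rfl | he'
    · exact hsB.1 (Finset.mem_coe.mpr hue) (Finset.mem_coe.mpr hve) huv
    · exact hle ⟨huv, e, he', hue, hve⟩
  · rintro ⟨hcl, hKfree, hmax⟩
    refine ⟨fun h => (containsKFam_iff H ℓ).mp h hKfree, ?_⟩
    intro e hecard heH
    have hle : shadowGraph H ≤ shadowGraph (insert e H) := by
      rintro u v ⟨huv, f, hf, hu, hv⟩
      exact ⟨huv, f, Finset.mem_insert_of_mem hf, hu, hv⟩
    have heclique : (shadowGraph (insert e H)).IsNClique r e :=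
      mem_isNClique_shadow _ (Finset.mem_insert_self e H) hecard
    have hnot : ¬ (shadowGraph H).IsNClique r e := fun h => heH (hcl e h)
    have hcount : cliqueCount (shadowGraph H) r < cliqueCount (shadowGraph (insert e H)) r := by
      have hsub : {s : Finset (Fin n) | (shadowGraph H).IsNClique r s} ⊆
          {s : Finset (Fin n) | (shadowGraph (insert e H)).IsNClique r s} :=
        fun s hs => ⟨hs.1.mono hle, hs.2⟩
      apply Set.ncard_lt_ncard _ (Set.toFinite _)
      rw [Set.ssubset_iff_of_subset hsub]
      exact ⟨e, heclique, hnot⟩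
    exact (containsKFam_iff _ ℓ).mpr (hmax _ hle hcount)
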